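/- Let q be a positive integer and set κ_q = ζ₀/(2πq), where ζ₀ is the unique root in (0, π) of φ(ζ) = 1 with φ(ζ) = (sinζ/ζ)(2−cosζ). If ℓ is a positive integer with ℓ ≥ 2q and κ ∈ (0, κ_q], then χ₁(κ; ℓ, q) < χ₁(κ; q, q). -/

import Mathlib

open MeasureTheory Real Set Filter
open scoped ENNReal

noncomputable section

/-- The quantity `χ₁(κ; ℓ, q)`. -/
def chi1 (κ : ℝ) (l q : ℕ) : ℝ :=
  if l = q then
    κ + Real.sin (4 * π * q * κ) / (4 * π * q) - Real.sin (2 * π * q * κ) / (π * q)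
  else
    Real.sin (2 * π * ((l:ℝ) - q) * κ) / (2 * π * ((l:ℝ) - q))
      + Real.sin (2 * π * ((l:ℝ) + q) * κ) / (2 * π * ((l:ℝ) + q))
      - Real.sin (2 * π * q * κ) / (π * q)

/-- `sin x / x` is antitone on `(0, π]`. -/
lemma sinc_anti' {x y : ℝ} (hx : 0 < x) (hxy : x ≤ y) (hy : y ≤ π) :
    Real.sin y / y ≤ Real.sin x / x := by
  have hy0 : 0 < y := hx.trans_le hxy
  rcases eq_or_lt_of_le hxy with rfl | hlt
  · exact le_rfl
  have hmem : y ∈ Icc 0 π := ⟨hy0.le, hy⟩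
  have h0 : (0:ℝ) ∈ Icc 0 π := ⟨le_rfl, Real.pi_pos.le⟩
  have ha : 0 ≤ x/y := by positivity
  have hb : 0 ≤ 1 - x/y := by
    have : x/y ≤ 1 := (div_le_one hy0).2 hxy
    linarith
  have h := strictConcaveOn_sin_Icc.concaveOn.2 hmem h0 ha hb (by ring)
  simp only [smul_eq_mul, mul_zero, Real.sin_zero, add_zero] at h
  rw [div_mul_cancel₀ x (ne_of_gt hy0)] at h
  have h2 : x / y * Real.sin y * y = x * Real.sin y := by field_simp
  have h3 := mul_le_mul_of_nonneg_right h hy0.le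
  rw [h2] at h3
  rw [div_le_div_iff₀ hy0 hx]
  nlinarith [h3]

lemma sin_ge_pi_sub' {x : ℝ} (hx : π ≤ x) : π - x ≤ Real.sin x := by
  have h := Real.sin_le (show (0:ℝ) ≤ x - π by linarith)
  rw [Real.sin_sub_pi] at h
  linarith

/-- Reflected Jordan inequality on `[π/2, π]`. -/
lemma jordan_refl' {x : ℝ} (h1 : π/2 ≤ x) (h2 : x ≤ π) : 2/π * (π - x) ≤ Real.sin x := by
  rw [← Real.sin_pi_sub]
  exact Real.mul_le_sin (by linarith) (by linarith)

/-- The one-variable inequality `sin z + sin 3z / 3 < z + sin 2z / 2` on `(0, π/3]`. -/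
lemma lem_i' {z : ℝ} (h0 : 0 < z) (h3 : z ≤ π/3) :
    Real.sin z + Real.sin (3*z)/3 < z + Real.sin (2*z)/2 := by
  set g : ℝ → ℝ := fun x => x + Real.sin (2*x)/2 - Real.sin x - Real.sin (3*x)/3 with hg
  have hderiv : ∀ x : ℝ, HasDerivAt g
      (1 + Real.cos (2*x) - Real.cos x - Real.cos (3*x)) x := by
    intro x
    have h2 : HasDerivAt (fun y : ℝ => Real.sin (2*y)) (Real.cos (2*x) * 2) x := by
      have := (Real.hasDerivAt_sin (2*x)).comp x ((hasDerivAt_id x).const_mul (2:ℝ))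
      exact this.congr_deriv (by simp)
    have h3' : HasDerivAt (fun y : ℝ => Real.sin (3*y)) (Real.cos (3*x) * 3) x := by
      have := (Real.hasDerivAt_sin (3*x)).comp x ((hasDerivAt_id x).const_mul (3:ℝ))
      exact this.congr_deriv (by simp)
    have := (((hasDerivAt_id x).add (h2.div_const 2)).sub (Real.hasDerivAt_sin x)).sub
      (h3'.div_const 3)
    exact this.congr_deriv (by ring)
  have hmono : StrictMonoOn g (Icc 0 (π/2)) := by
    refine strictMonoOn_of_deriv_pos (convex_Icc _ _) ?_ ?_
    · fun_prop
    · intro x hx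
      rw [interior_Icc] at hx
      rw [(hderiv x).deriv]
      have hc : 0 < Real.cos x :=
        Real.cos_pos_of_mem_Ioo ⟨by linarith [hx.1, Real.pi_pos], hx.2⟩
      have hlt : Real.cos (2*x) < Real.cos x := by
        apply Real.strictAntiOn_cos ⟨hx.1.le, by linarith [hx.2, Real.pi_pos]⟩
          ⟨by linarith [hx.1], by linarith [hx.2]⟩ (by linarith [hx.1])
      have hsum : Real.cos (3*x) + Real.cos x = 2 * Real.cos (2*x) * Real.cos x := by
        have h := Real.cos_add_cos (3*x) x
        norm_num at h
        convert h using 3 <;> ring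
      have h2m : Real.cos (2*x) = 2 * Real.cos x ^ 2 - 1 := Real.cos_two_mul x
      nlinarith [mul_pos hc (sub_pos.2 hlt)]
  have hmem : z ∈ Icc 0 (π/2) := ⟨h0.le, by linarith [Real.pi_pos]⟩
  have h00 : (0:ℝ) ∈ Icc 0 (π/2) := ⟨le_rfl, by linarith [Real.pi_pos]⟩
  have := hmono h00 hmem h0
  have hg0 : g 0 = 0 := by simp [hg]
  have hgz : g z = z + Real.sin (2*z)/2 - Real.sin z - Real.sin (3*z)/3 := rfl
  rw [hg0] at this
  linarith [this, hgz ▸ this]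

lemma bound_sinc' {c z : ℝ} (hc : 1 ≤ c) (h0 : 0 < z) (hcz : c*z ≤ π) :
    Real.sin (c*z)/c ≤ Real.sin z := by
  have hc0 : 0 < c := by linarith
  have h := sinc_anti' h0 (le_mul_of_one_le_left h0.le hc) hcz
  rw [show Real.sin (c*z)/(c*z) = (Real.sin (c*z)/c)/z by rw [div_div]] at h
  rw [div_le_div_iff_of_pos_right h0] at h
  exact h

lemma bound_sinc3' {c z : ℝ} (hc : 3 ≤ c) (h0 : 0 < z) (hcz : c*z ≤ π) :
    Real.sin (c*z)/c ≤ Real.sin (3*z)/3 := by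
  have h30 : 0 < 3*z := by linarith
  have h := sinc_anti' h30 (by nlinarith) hcz
  rw [show Real.sin (c*z)/(c*z) = (Real.sin (c*z)/c)/z by rw [div_div],
      show Real.sin (3*z)/(3*z) = (Real.sin (3*z)/3)/z by rw [div_div]] at h
  rw [div_le_div_iff_of_pos_right h0] at h
  exact h

/-- The key inequality: for `a ≥ 1` and `z ∈ (0, π)`,
`sin(az)/a + sin((a+2)z)/(a+2) < z + sin(2z)/2`. -/
lemma key_ineq' {a z : ℝ} (ha : 1 ≤ a) (h0 : 0 < z) (hπ : z < π) :
    Real.sin (a*z)/a + Real.sin ((a+2)*z)/(a+2) < z + Real.sin (2*z)/2 := by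
  have hπ0 := Real.pi_pos
  have hπ3 := Real.pi_gt_three
  have ha0 : 0 < a := by linarith
  have hb : (3:ℝ) ≤ a + 2 := by linarith
  have hb0 : 0 < a + 2 := by linarith
  have hid : z/π*π = z := div_mul_cancel₀ _ (ne_of_gt hπ0)
  have hzπ : z/π < 1 := (div_lt_one hπ0).2 hπ
  have hzπ0 : 0 < z/π := div_pos h0 hπ0
  have c1 : Real.sin (a*z)/a ≤ 1/a := (div_le_div_iff_of_pos_right ha0).2 (Real.sin_le_one _)
  have c2 : Real.sin ((a+2)*z)/(a+2) ≤ 1/(a+2) :=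
    (div_le_div_iff_of_pos_right hb0).2 (Real.sin_le_one _)
  have c2c : 1/(a+2) ≤ 1/3 := by
    rw [div_le_div_iff₀ hb0 (by norm_num)]; linarith
  by_cases hA : (a+2)*z ≤ π
  · have hz3 : z ≤ π/3 := by nlinarith
    have b1 : Real.sin (a*z)/a ≤ Real.sin z := bound_sinc' ha h0 (by nlinarith)
    have b2 : Real.sin ((a+2)*z)/(a+2) ≤ Real.sin (3*z)/3 := bound_sinc3' hb h0 hA
    linarith [lem_i' h0 hz3]
  · push_neg at hA
    have c2b : 1/(a+2) < z/π := by
      rw [div_lt_div_iff₀ hb0 hπ0]; nlinarith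
    by_cases hB : a*z ≤ π
    · have b1 : Real.sin (a*z)/a ≤ Real.sin z := bound_sinc' ha h0 hB
      by_cases h3 : z ≤ π/3
      · by_cases h4 : z ≤ π/4
        · have hj : 2/π*(2*z) ≤ Real.sin (2*z) := Real.mul_le_sin (by linarith) (by linarith)
          have he : 2/π*(2*z) = 4*(z/π) := by ring
          have hs : Real.sin z < z := Real.sin_lt h0
          linarith
        · push_neg at h4
          have hj : 2/π*(π - 2*z) ≤ Real.sin (2*z) := jordan_refl' (by linarith) (by linarith)
          have he : 2/π*(π - 2*z) = 2 - 4*(z/π) := by field_simp; ring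
          have hs : Real.sin z < z := Real.sin_lt h0
          have h13 : z/π ≤ 1/3 := by rw [div_le_iff₀ hπ0]; linarith
          linarith
      · push_neg at h3
        have ht : 1/3 < z/π := by rw [lt_div_iff₀ hπ0]; linarith
        have hs1 : Real.sin z ≤ 1 := Real.sin_le_one z
        by_cases h2 : z ≤ π/2
        · have hj : 2/π*(π - 2*z) ≤ Real.sin (2*z) := jordan_refl' (by linarith) (by linarith)
          have he : 2/π*(π - 2*z) = 2 - 4*(z/π) := by field_simp; ring
          have hkey : 1/3 + 2*(z/π) < z := by nlinarith
          linarith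
        · push_neg at h2
          have hj : π - 2*z ≤ Real.sin (2*z) := sin_ge_pi_sub' (by linarith)
          linarith
    · push_neg at hB
      have c1b : 1/a < z/π := by rw [div_lt_div_iff₀ ha0 hπ0]; nlinarith
      by_cases h3 : z ≤ π/3
      · have hs2 : 0 < Real.sin (2*z) :=
          Real.sin_pos_of_pos_of_lt_pi (by linarith) (by linarith)
        have h2z : 2*(z/π) < z := by nlinarith
        linarith
      · push_neg at h3
        have ht : 1/3 < z/π := by rw [lt_div_iff₀ hπ0]; linarith
        by_cases h2 : z ≤ π/2
        · have hs2 : 0 ≤ Real.sin (2*z) :=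
            Real.sin_nonneg_of_nonneg_of_le_pi (by linarith) (by linarith)
          have hkey : z/π + 1/3 < z := by nlinarith
          linarith
        · push_neg at h2
          have hj : π - 2*z ≤ Real.sin (2*z) := sin_ge_pi_sub' (by linarith)
          linarith

/-- If `ℓ ≥ 2q` and `κ ∈ (0, κ_q]` with `κ_q = ζ₀/(2πq)`, where `ζ₀` is
the unique root in `(0, π)` of `(sin ζ/ζ)(2 − cos ζ) = 1`, then `χ₁(κ;ℓ,q) < χ₁(κ;q,q)`. -/
theorem stmt16 (q l : ℕ) (hq : 0 < q) (hl : 2 * q ≤ l) (ζ₀ : ℝ)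
    (hζ₀ : ζ₀ ∈ Set.Ioo 0 π) (hroot : (Real.sin ζ₀ / ζ₀) * (2 - Real.cos ζ₀) = 1)
    (κ : ℝ) (hκ : κ ∈ Set.Ioc (0:ℝ) (ζ₀ / (2 * π * q))) :
    chi1 κ l q < chi1 κ q q := by
  have hπ0 := Real.pi_pos
  have hq0 : (0:ℝ) < q := by exact_mod_cast hq
  have hq' : (q:ℝ) ≠ 0 := ne_of_gt hq0
  have hlq : l ≠ q := by omega
  obtain ⟨hκ0, hκ1⟩ := hκ
  have hc : (0:ℝ) < 2*π*q := by positivity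
  have hz0 : 0 < 2*π*q*κ := by positivity
  have hzz : 2*π*(q:ℝ)*κ ≤ ζ₀ := by
    have := (le_div_iff₀ hc).mp hκ1
    linarith [this]
  have hzπ : 2*π*(q:ℝ)*κ < π := lt_of_le_of_lt hzz hζ₀.2
  have hl2 : (2*q:ℝ) ≤ l := by exact_mod_cast hl
  set a : ℝ := ((l:ℝ) - q)/q with hadef
  have ha : 1 ≤ a := by rw [le_div_iff₀ hq0]; linarith
  have hkey := key_ineq' ha hz0 hzπ
  simp only [chi1, if_neg hlq, eq_self_iff_true, if_true]
  have e1 : 2*π*((l:ℝ)-q)*κ = a*(2*π*q*κ) := by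
    rw [hadef]; field_simp
  have e2 : 2*π*((l:ℝ)+q)*κ = (a+2)*(2*π*q*κ) := by
    rw [hadef]; field_simp; ring
  have e3 : 4*π*(q:ℝ)*κ = 2*(2*π*q*κ) := by ring
  have d1 : 2*π*((l:ℝ)-q) = a*(2*π*q) := by rw [hadef]; field_simp
  have d2 : 2*π*((l:ℝ)+q) = (a+2)*(2*π*q) := by rw [hadef]; field_simp; ring
  have d3 : 4*π*(q:ℝ) = 2*(2*π*q) := by ring
  rw [e1, e2, e3, d1, d2, d3]
  rw [show Real.sin (a*(2*π*(q:ℝ)*κ))/(a*(2*π*q)) = (Real.sin (a*(2*π*q*κ))/a)/(2*π*q) by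
        rw [div_div]]
  rw [show Real.sin ((a+2)*(2*π*(q:ℝ)*κ))/((a+2)*(2*π*q))
        = (Real.sin ((a+2)*(2*π*q*κ))/(a+2))/(2*π*q) by rw [div_div]]
  rw [show Real.sin (2*(2*π*(q:ℝ)*κ))/(2*(2*π*q)) = (Real.sin (2*(2*π*q*κ))/2)/(2*π*q) by
        rw [div_div]]
  have eR : κ + Real.sin (2*(2*π*(q:ℝ)*κ))/2/(2*π*(q:ℝ))
      = (2*π*(q:ℝ)*κ + Real.sin (2*(2*π*(q:ℝ)*κ))/2)/(2*π*(q:ℝ)) := by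
    field_simp
  rw [sub_lt_sub_iff_right, ← add_div, eR, div_lt_div_iff_of_pos_right hc]
  exact hkey
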